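/- (Lemma 2, second part) Let R > 0 and for each integer M ≥ 1 let λ*(M) > 0 be any maximizer of S(M,·) over (0,∞) (i.e. S(M,λ*(M)) ≥ S(M,λ) for all λ > 0). Then lim_{M→∞} λ*(M)/M = 1. -/

import Mathlib

open Finset Real Filter

-- n^n ≤ n! * e^n
lemma fact_lower : ∀ n : ℕ, (n : ℝ) ^ n ≤ (n.factorial : ℝ) * Real.exp 1 ^ n := by
  intro n
  induction n with
  | zero => simp
  | succ n ih =>
    have hstep : ((n : ℝ) + 1) ^ n ≤ (n : ℝ) ^ n * Real.exp 1 := by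
      rcases Nat.eq_zero_or_pos n with h | h
      · subst h; simpa using Real.one_le_exp zero_le_one
      · have hn : (0 : ℝ) < n := by exact_mod_cast h
        have h1 : (n : ℝ) + 1 ≤ n * Real.exp (1 / n) := by
          have := Real.add_one_le_exp (1 / (n : ℝ))
          calc (n : ℝ) + 1 = n * (1 / n + 1) := by field_simp; ring
            _ ≤ n * Real.exp (1 / n) := by nlinarith [Real.exp_pos (1 / (n:ℝ))]
        calc ((n : ℝ) + 1) ^ n ≤ ((n : ℝ) * Real.exp (1 / n)) ^ n := by
              apply pow_le_pow_left₀ (by positivity) h1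
          _ = (n : ℝ) ^ n * Real.exp (1 / n) ^ n := by rw [mul_pow]
          _ = (n : ℝ) ^ n * Real.exp 1 := by
              rw [← Real.exp_nat_mul]
              congr 2
              field_simp
    have hfn : (0 : ℝ) ≤ (n.factorial : ℝ) := by positivity
    have hen : (0:ℝ) < Real.exp 1 ^ n := by positivity
    push_cast [Nat.factorial_succ, pow_succ]
    calc ((n : ℝ) + 1) ^ n * ((n:ℝ) + 1)
        ≤ ((n : ℝ) ^ n * Real.exp 1) * ((n:ℝ)+1) := by
          apply mul_le_mul_of_nonneg_right hstep (by positivity)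
      _ ≤ ((n.factorial : ℝ) * Real.exp 1 ^ n * Real.exp 1) * ((n:ℝ)+1) := by
          apply mul_le_mul_of_nonneg_right _ (by positivity)
          apply mul_le_mul_of_nonneg_right ih (Real.exp_pos 1).le
      _ = ((n:ℝ)+1) * (n.factorial:ℝ) * (Real.exp 1 ^ n * Real.exp 1) := by ring

-- (k+j)! ≤ k! * (k+j+1)^j
lemma fact_upper : ∀ (j k : ℕ), (k + j).factorial ≤ k.factorial * (k + j + 1) ^ j := by
  intro j
  induction j with
  | zero => simp
  | succ j ih =>
    intro k
    have h1 := ih k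
    calc (k + (j+1)).factorial = (k + j + 1) * (k + j).factorial := by
          rw [show k + (j+1) = (k+j) + 1 from by ring, Nat.factorial_succ]
      _ ≤ (k + j + 1) * (k.factorial * (k + j + 1) ^ j) := Nat.mul_le_mul_left _ h1
      _ ≤ (k + (j+1) + 1) * (k.factorial * (k + (j+1) + 1) ^ j) := by
          apply Nat.mul_le_mul (by omega)
          exact Nat.mul_le_mul_left _ (Nat.pow_le_pow_left (by omega) _)
      _ = k.factorial * (k + (j+1) + 1) ^ (j+1) := by ring

-- tail bound
lemma tail_bound (M : ℕ) (hM : 1 ≤ M) {μ a : ℝ} (hμ : 0 ≤ μ) (ha : 0 ≤ a) (ha1 : a < 1)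
    (hle : μ ≤ a * M) :
    Real.exp μ - ∑ k ∈ Finset.range M, μ ^ k / (k.factorial : ℝ)
      ≤ μ ^ M / (M.factorial : ℝ) * (1 - a)⁻¹ := by
  have hsum : Summable (fun k : ℕ => μ ^ k / (k.factorial : ℝ)) :=
    Real.summable_pow_div_factorial μ
  have hexp : Real.exp μ = ∑' k : ℕ, μ ^ k / (k.factorial : ℝ) := by
    rw [Real.exp_eq_exp_ℝ, NormedSpace.exp_eq_tsum_div]
  have hsplit := Summable.sum_add_tsum_nat_add M hsum
  have hMpos : (0:ℝ) < M := by exact_mod_cast hM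
  have hterm : ∀ k : ℕ, μ ^ (k + M) / ((k + M).factorial : ℝ)
      ≤ μ ^ M / (M.factorial : ℝ) * a ^ k := by
    intro k
    have hfac : (M.factorial : ℝ) * (M : ℝ) ^ k ≤ ((k + M).factorial : ℝ) := by
      have := Nat.factorial_mul_pow_sub_le_factorial (n := M) (m := M + k) (by omega)
      have h2 : M + k - M = k := by omega
      rw [h2] at this
      rw [show k + M = M + k from by ring]
      exact_mod_cast this
    have hfp : (0:ℝ) < (M.factorial : ℝ) := by positivity
    have hkp : (0:ℝ) < ((k + M).factorial : ℝ) := by positivity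
    have hμa : μ ^ k ≤ (a * M) ^ k := pow_le_pow_left₀ hμ hle k
    -- μ^(k+M) = μ^M * μ^k
    rw [pow_add]
    rw [div_le_iff₀ hkp]
    have key : μ ^ k * (M.factorial : ℝ) * (M:ℝ)^k ≤ a ^ k * (M:ℝ)^k * ((k+M).factorial : ℝ) := by
      calc μ ^ k * (M.factorial : ℝ) * (M:ℝ)^k
          ≤ (a * M) ^ k * (M.factorial : ℝ) * (M:ℝ)^k := by
            apply mul_le_mul_of_nonneg_right (mul_le_mul_of_nonneg_right hμa hfp.le) (by positivity)
        _ = a ^ k * (M:ℝ)^k * ((M.factorial : ℝ) * (M:ℝ)^k) := by ring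
        _ ≤ a ^ k * (M:ℝ)^k * ((k+M).factorial : ℝ) := by
            apply mul_le_mul_of_nonneg_left hfac (by positivity)
    have hμM : (0:ℝ) ≤ μ ^ M := by positivity
    have hMk : (0:ℝ) < (M:ℝ)^k := by positivity
    have key2 : μ ^ k * (M.factorial:ℝ) ≤ a ^ k * ((k+M).factorial : ℝ) := by
      apply le_of_mul_le_mul_right _ hMk
      nlinarith [key]
    rw [div_mul_eq_mul_div, div_mul_eq_mul_div, le_div_iff₀ hfp]
    nlinarith [key2, hμM]
  have hgeom : Summable (fun k : ℕ => μ ^ M / (M.factorial : ℝ) * a ^ k) :=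
    (summable_geometric_of_lt_one ha ha1).mul_left _
  have hshift : Summable (fun k : ℕ => μ ^ (k + M) / ((k + M).factorial : ℝ)) := by
    have := (summable_nat_add_iff M).2 hsum
    simpa using this
  have h1 : ∑' k : ℕ, μ ^ (k + M) / ((k + M).factorial : ℝ)
      ≤ ∑' k : ℕ, μ ^ M / (M.factorial : ℝ) * a ^ k :=
    Summable.tsum_le_tsum hterm hshift hgeom
  have h2 : (∑' k : ℕ, μ ^ M / (M.factorial : ℝ) * a ^ k)
      = μ ^ M / (M.factorial : ℝ) * (1 - a)⁻¹ := by
    rw [tsum_mul_left, tsum_geometric_of_lt_one ha ha1]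
  rw [hexp, ← hsplit]
  simpa [add_sub_cancel_left] using h2 ▸ h1

/-- Asymptotic throughput of slotted ALOHA with MPR capability `M` at Poisson
attempt rate `λ`: `S(M,λ) = R · λ · ∑_{k=0}^{M−1} (λ^k/k!) e^{−λ}`. -/
noncomputable def S (M : ℕ) (R lam : ℝ) : ℝ :=
  R * lam * ∑ k ∈ Finset.range M, lam ^ k / (Nat.factorial k : ℝ) * Real.exp (-lam)

lemma S_eq (M : ℕ) (R lam : ℝ) :
    S M R lam = R * lam * ((∑ k ∈ Finset.range M, lam ^ k / (Nat.factorial k : ℝ)) * Real.exp (-lam)) := by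
  rw [S, Finset.sum_mul]

lemma S_le (M : ℕ) (R lam : ℝ) (hR : 0 ≤ R) (hlam : 0 ≤ lam) : S M R lam ≤ R * lam := by
  rw [S_eq]
  have h1 : (∑ k ∈ Finset.range M, lam ^ k / (Nat.factorial k : ℝ)) * Real.exp (-lam) ≤ 1 := by
    have := Real.sum_le_exp_of_nonneg hlam M
    calc (∑ k ∈ Finset.range M, lam ^ k / (Nat.factorial k : ℝ)) * Real.exp (-lam)
        ≤ Real.exp lam * Real.exp (-lam) := by
          apply mul_le_mul_of_nonneg_right this (Real.exp_pos _).le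
      _ = 1 := by rw [← Real.exp_add]; simp
  nlinarith [mul_nonneg hR hlam, Real.exp_pos (-lam),
    Finset.sum_nonneg (fun k (_ : k ∈ Finset.range M) => by positivity :
      ∀ k ∈ Finset.range M, (0:ℝ) ≤ lam ^ k / (Nat.factorial k : ℝ))]

-- lower bound at lam = a*M
lemma S_lower (M : ℕ) (hM : 1 ≤ M) (R : ℝ) (hR : 0 ≤ R) {a : ℝ} (ha : 0 < a) (ha1 : a < 1) :
    R * (a * M) * (1 - (a * Real.exp (1 - a)) ^ M * (1 - a)⁻¹) ≤ S M R (a * M) := by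
  set μ := a * (M : ℝ) with hμdef
  have hMpos : (0:ℝ) < M := by exact_mod_cast hM
  have hμ : 0 ≤ μ := by positivity
  have htail := tail_bound M hM hμ ha.le ha1 (le_refl _)
  have hfl := fact_lower M
  have hfp : (0:ℝ) < (M.factorial : ℝ) := by positivity
  -- e^{-μ} μ^M / M! ≤ (a e^{1-a})^M
  have hkey : μ ^ M / (M.factorial : ℝ) * Real.exp (-μ) ≤ (a * Real.exp (1 - a)) ^ M := by
    have h1 : μ ^ M = a ^ M * (M:ℝ) ^ M := mul_pow a (M:ℝ) M
    have h2 : (M:ℝ) ^ M / (M.factorial : ℝ) ≤ Real.exp 1 ^ M := by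
      rw [div_le_iff₀ hfp]
      nlinarith [hfl]
    have h3 : (a * Real.exp (1 - a)) ^ M = a ^ M * (Real.exp 1 ^ M * Real.exp (-μ)) := by
      rw [mul_pow, ← Real.exp_nat_mul, ← Real.exp_nat_mul, ← Real.exp_add]
      congr 2
      rw [hμdef]; ring
    rw [h3, h1]
    have : a ^ M * (M:ℝ) ^ M / (M.factorial:ℝ) ≤ a ^ M * Real.exp 1 ^ M := by
      rw [mul_div_assoc]
      exact mul_le_mul_of_nonneg_left h2 (by positivity)
    calc a ^ M * (M:ℝ) ^ M / (M.factorial:ℝ) * Real.exp (-μ)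
        ≤ a ^ M * Real.exp 1 ^ M * Real.exp (-μ) := by
          apply mul_le_mul_of_nonneg_right this (Real.exp_pos _).le
      _ = a ^ M * (Real.exp 1 ^ M * Real.exp (-μ)) := by ring
  -- probability ≥ 1 - q^M (1-a)⁻¹
  have hprob : 1 - (a * Real.exp (1 - a)) ^ M * (1 - a)⁻¹
      ≤ (∑ k ∈ Finset.range M, μ ^ k / (Nat.factorial k : ℝ)) * Real.exp (-μ) := by
    have h4 : Real.exp μ - μ ^ M / (M.factorial : ℝ) * (1 - a)⁻¹
        ≤ ∑ k ∈ Finset.range M, μ ^ k / (Nat.factorial k : ℝ) := by linarith [htail]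
    have h5 := mul_le_mul_of_nonneg_right h4 (Real.exp_pos (-μ)).le
    have h6 : Real.exp μ * Real.exp (-μ) = 1 := by rw [← Real.exp_add]; simp
    have h7 : μ ^ M / (M.factorial : ℝ) * (1 - a)⁻¹ * Real.exp (-μ)
        ≤ (a * Real.exp (1 - a)) ^ M * (1 - a)⁻¹ := by
      have h8 : (0:ℝ) ≤ (1 - a)⁻¹ := by rw [inv_nonneg]; linarith
      calc μ ^ M / (M.factorial : ℝ) * (1 - a)⁻¹ * Real.exp (-μ)
          = μ ^ M / (M.factorial : ℝ) * Real.exp (-μ) * (1 - a)⁻¹ := by ring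
        _ ≤ (a * Real.exp (1 - a)) ^ M * (1 - a)⁻¹ :=
            mul_le_mul_of_nonneg_right hkey h8
    nlinarith [h5, h6, h7]
  rw [S_eq]
  exact mul_le_mul_of_nonneg_left hprob (mul_nonneg hR (by positivity))

lemma S_upper (M : ℕ) (hM : 1 ≤ M) (R b lam : ℝ) (hR : 0 ≤ R) (hb : (M:ℝ) ≤ b)
    (hlam : b ≤ lam) :
    S M R lam ≤ R * M ^ 2 * ((b / M) ^ M * Real.exp ((M:ℝ) - b)) := by
  obtain ⟨N, rfl⟩ : ∃ N, M = N + 1 := ⟨M - 1, by omega⟩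
  set M := N + 1
  have hMpos : (0:ℝ) < M := by positivity
  have hbpos : (0:ℝ) < b := lt_of_lt_of_le hMpos hb
  have hlpos : (0:ℝ) < lam := lt_of_lt_of_le hbpos hlam
  have hNf : (0:ℝ) < (N.factorial : ℝ) := by positivity
  -- (i)
  have hterm : ∀ k ∈ Finset.range M, lam ^ k / (k.factorial : ℝ) * Real.exp (-lam)
      ≤ lam ^ N / (N.factorial : ℝ) * Real.exp (-lam) := by
    intro k hk
    have hkN : k ≤ N := by simp [M] at hk; omega
    apply mul_le_mul_of_nonneg_right _ (Real.exp_pos _).le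
    rw [div_le_div_iff₀ (by positivity) hNf]
    have hfu : (N.factorial : ℝ) ≤ (k.factorial : ℝ) * ((N:ℝ) + 1) ^ (N - k) := by
      have := fact_upper (N - k) k
      rw [show k + (N - k) = N from by omega] at this
      have hcast : ((k.factorial * (N + 1) ^ (N - k) : ℕ) : ℝ)
          = (k.factorial : ℝ) * ((N:ℝ) + 1) ^ (N - k) := by push_cast; ring
      calc (N.factorial : ℝ) ≤ ((k.factorial * (N + 1) ^ (N - k) : ℕ) : ℝ) := by exact_mod_cast this
        _ = _ := hcast
    have hpow : ((N:ℝ) + 1) ^ (N - k) ≤ lam ^ (N - k) := by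
      apply pow_le_pow_left₀ (by positivity)
      calc (N:ℝ) + 1 = (M:ℕ) := by push_cast [M]; ring
        _ ≤ b := hb
        _ ≤ lam := hlam
    calc lam ^ k * (N.factorial : ℝ)
        ≤ lam ^ k * ((k.factorial : ℝ) * ((N:ℝ) + 1) ^ (N - k)) :=
          mul_le_mul_of_nonneg_left hfu (by positivity)
      _ ≤ lam ^ k * ((k.factorial : ℝ) * lam ^ (N - k)) := by
          apply mul_le_mul_of_nonneg_left _ (by positivity)
          exact mul_le_mul_of_nonneg_left hpow (by positivity)
      _ = lam ^ (k + (N - k)) * (k.factorial : ℝ) := by rw [pow_add]; ring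
      _ = lam ^ N * (k.factorial : ℝ) := by rw [show k + (N - k) = N from by omega]
  -- (ii)+(iii)
  have hsum : ∑ k ∈ Finset.range M, lam ^ k / (k.factorial : ℝ) * Real.exp (-lam)
      ≤ (M:ℝ) * (lam ^ N / (N.factorial : ℝ) * Real.exp (-lam)) := by
    calc ∑ k ∈ Finset.range M, lam ^ k / (k.factorial : ℝ) * Real.exp (-lam)
        ≤ ∑ _k ∈ Finset.range M, lam ^ N / (N.factorial : ℝ) * Real.exp (-lam) :=
          Finset.sum_le_sum hterm
      _ = (M:ℝ) * (lam ^ N / (N.factorial : ℝ) * Real.exp (-lam)) := by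
          rw [Finset.sum_const, Finset.card_range]; simp [nsmul_eq_mul]
  have h3 : S M R lam ≤ R * (M:ℝ) * (lam ^ M * Real.exp (-lam)) / (N.factorial : ℝ) := by
    rw [S]
    calc R * lam * ∑ k ∈ Finset.range M, lam ^ k / (k.factorial : ℝ) * Real.exp (-lam)
        ≤ R * lam * ((M:ℝ) * (lam ^ N / (N.factorial : ℝ) * Real.exp (-lam))) := by
          apply mul_le_mul_of_nonneg_left hsum (by positivity)
      _ = R * (M:ℝ) * (lam ^ (N+1) * Real.exp (-lam)) / (N.factorial : ℝ) := by
          rw [pow_succ]; ring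
  -- (iv) monotone decreasing
  have h4 : lam ^ M * Real.exp (-lam) ≤ b ^ M * Real.exp (-b) := by
    have h5 : lam ≤ b * Real.exp ((lam - b) / b) := by
      have := Real.add_one_le_exp ((lam - b) / b)
      calc lam = b * ((lam - b)/b + 1) := by field_simp; ring
        _ ≤ b * Real.exp ((lam - b)/b) := by nlinarith [Real.exp_pos ((lam - b)/b)]
    have h6 : lam ^ M ≤ b ^ M * Real.exp (lam - b) := by
      calc lam ^ M ≤ (b * Real.exp ((lam - b)/b)) ^ M := pow_le_pow_left₀ hlpos.le h5 M
        _ = b ^ M * Real.exp ((M:ℝ) * ((lam - b)/b)) := by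
            rw [mul_pow, ← Real.exp_nat_mul]
        _ ≤ b ^ M * Real.exp (lam - b) := by
            apply mul_le_mul_of_nonneg_left _ (by positivity)
            apply Real.exp_le_exp.2
            rw [mul_div_assoc', div_le_iff₀ hbpos]
            nlinarith [hb, hlam]
    calc lam ^ M * Real.exp (-lam) ≤ b ^ M * Real.exp (lam - b) * Real.exp (-lam) := by
          apply mul_le_mul_of_nonneg_right h6 (Real.exp_pos _).le
      _ = b ^ M * Real.exp (-b) := by rw [mul_assoc, ← Real.exp_add]; congr 2; ring
  -- (v) factorial lower bound
  have h7 : (1:ℝ) / (N.factorial : ℝ) ≤ (M:ℝ) * Real.exp 1 ^ (M:ℕ) / (M:ℝ) ^ (M:ℕ) := by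
    have hfl := fact_lower M
    have hMf : ((M:ℕ).factorial : ℝ) = (M:ℝ) * (N.factorial : ℝ) := by
      rw [show (M:ℕ) = N + 1 from rfl, Nat.factorial_succ]; push_cast; ring
    rw [hMf] at hfl
    rw [div_le_div_iff₀ hNf (by positivity)]
    nlinarith [hfl, hNf, hMpos]
  -- combine
  have hbM : (0:ℝ) ≤ b ^ (M:ℕ) * Real.exp (-b) := by positivity
  have hA : R * (M:ℝ) * (lam ^ M * Real.exp (-lam)) / (N.factorial : ℝ)
      ≤ R * (M:ℝ) * (b ^ M * Real.exp (-b)) / (N.factorial : ℝ) := by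
    have hh := mul_le_mul_of_nonneg_left h4 (mul_nonneg hR hMpos.le)
    rw [div_le_div_iff₀ hNf hNf]
    nlinarith [hh, hNf]
  have hB : b ^ M * Real.exp (-b) / (N.factorial : ℝ)
      ≤ (M:ℝ) * ((b / M) ^ (M:ℕ) * Real.exp ((M:ℝ) - b)) := by
    have h9 := mul_le_mul_of_nonneg_left h7 hbM
    have hexpM : Real.exp 1 ^ (M:ℕ) = Real.exp (M:ℝ) := by
      rw [← Real.exp_nat_mul]; norm_num
    have he : Real.exp (-b) * Real.exp (M:ℝ) = Real.exp ((M:ℝ) - b) := by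
      rw [← Real.exp_add]; congr 1; ring
    have hMM : ((M:ℝ):ℝ) ^ (M:ℕ) ≠ 0 := by positivity
    have heq : b ^ (M:ℕ) * Real.exp (-b) * ((M:ℝ) * Real.exp 1 ^ (M:ℕ) / (M:ℝ) ^ (M:ℕ))
        = (M:ℝ) * ((b / M) ^ (M:ℕ) * Real.exp ((M:ℝ) - b)) := by
      rw [hexpM, div_pow, ← he]
      field_simp
    calc b ^ (M:ℕ) * Real.exp (-b) / (N.factorial : ℝ)
        = b ^ (M:ℕ) * Real.exp (-b) * ((1:ℝ) / (N.factorial : ℝ)) := by ring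
      _ ≤ b ^ (M:ℕ) * Real.exp (-b) * ((M:ℝ) * Real.exp 1 ^ (M:ℕ) / (M:ℝ) ^ (M:ℕ)) := h9
      _ = (M:ℝ) * ((b / M) ^ (M:ℕ) * Real.exp ((M:ℝ) - b)) := heq
  have h8 : R * (M:ℝ) * (b ^ M * Real.exp (-b)) / (N.factorial : ℝ)
      ≤ R * (M:ℝ) ^ 2 * ((b / M) ^ (M:ℕ) * Real.exp ((M:ℝ) - b)) := by
    have h10 := mul_le_mul_of_nonneg_left hB (mul_nonneg hR hMpos.le)
    calc R * (M:ℝ) * (b ^ M * Real.exp (-b)) / (N.factorial : ℝ)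
        = R * (M:ℝ) * (b ^ M * Real.exp (-b) / (N.factorial : ℝ)) := by ring
      _ ≤ R * (M:ℝ) * ((M:ℝ) * ((b / M) ^ (M:ℕ) * Real.exp ((M:ℝ) - b))) := h10
      _ = R * (M:ℝ) ^ 2 * ((b / M) ^ (M:ℕ) * Real.exp ((M:ℝ) - b)) := by ring
  exact le_trans h3 (le_trans hA h8)


set_option maxHeartbeats 1000000 in
/-- Lemma 2, second part: if `λ*(M) > 0` maximizes `S(M,·)` over
`(0,∞)` for each `M ≥ 1`, then `λ*(M)/M → 1` as `M → ∞`. -/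
theorem stmt11 (R : ℝ) (hR : 0 < R) (lamStar : ℕ → ℝ)
    (hpos : ∀ M : ℕ, 1 ≤ M → 0 < lamStar M)
    (hmax : ∀ M : ℕ, 1 ≤ M → ∀ lam : ℝ, 0 < lam → S M R lam ≤ S M R (lamStar M)) :
    Filter.Tendsto (fun M : ℕ => lamStar M / (M : ℝ)) Filter.atTop (nhds 1) := by
  rw [Metric.tendsto_nhds]
  intro ε hε
  obtain ⟨δ, hδpos, hδ4, hδε⟩ : ∃ δ : ℝ, 0 < δ ∧ δ ≤ 1 / 4 ∧ δ < ε :=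
    ⟨min (ε / 2) (1 / 4), lt_min (by linarith) (by norm_num), min_le_right _ _,
      lt_of_le_of_lt (min_le_left _ _) (by linarith)⟩
  obtain ⟨a, ha0, ha1, h1a, ha78⟩ :
      ∃ a : ℝ, 0 < a ∧ a < 1 ∧ 1 - a = δ / 2 ∧ 7 / 8 ≤ a :=
    ⟨1 - δ / 2, by linarith, by linarith, by ring, by linarith⟩
  obtain ⟨q, hqdef⟩ : ∃ q : ℝ, q = a * Real.exp (1 - a) := ⟨_, rfl⟩
  obtain ⟨p, hpdef⟩ : ∃ p : ℝ, p = (1 + δ) * Real.exp (-δ) := ⟨_, rfl⟩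
  have hq0 : 0 ≤ q := by rw [hqdef]; positivity
  have hq1 : q < 1 := by
    have hne : a - 1 ≠ 0 := by intro h; rw [sub_eq_zero] at h; exact absurd h (ne_of_lt ha1)
    have h1 := Real.add_one_lt_exp hne
    have he : Real.exp (a - 1) * Real.exp (1 - a) = 1 := by
      rw [← Real.exp_add]; norm_num
    rw [hqdef]
    nlinarith [Real.exp_pos (1 - a)]
  have hp0 : 0 ≤ p := by rw [hpdef]; positivity
  have hp1 : p < 1 := by
    have hne : δ ≠ 0 := ne_of_gt hδpos
    have h1 := Real.add_one_lt_exp hne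
    have he : Real.exp δ * Real.exp (-δ) = 1 := by rw [← Real.exp_add]; norm_num
    rw [hpdef]
    nlinarith [Real.exp_pos (-δ)]
  have hq_lim : Tendsto (fun M : ℕ => q ^ M) atTop (nhds 0) :=
    tendsto_pow_atTop_nhds_zero_of_lt_one hq0 hq1
  have E1 : ∀ᶠ M : ℕ in atTop, q ^ M < (δ / 2) ^ 2 :=
    hq_lim.eventually (gt_mem_nhds (by positivity))
  have hp_lim : Tendsto (fun M : ℕ => (M : ℝ) * p ^ M) atTop (nhds 0) := by
    have := tendsto_pow_const_mul_const_pow_of_lt_one 1 hp0 hp1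
    simpa [pow_one] using this
  have E2 : ∀ᶠ M : ℕ in atTop, (M : ℝ) * p ^ M < 1 / 4 :=
    hp_lim.eventually (gt_mem_nhds (by norm_num))
  filter_upwards [eventually_ge_atTop 1, E1, E2] with M hM1 hqM hpM
  have hMpos : (0 : ℝ) < M := by exact_mod_cast hM1
  obtain ⟨t, htdef⟩ : ∃ t : ℝ, t = q ^ M * (1 - a)⁻¹ := ⟨_, rfl⟩
  have ht0 : 0 ≤ t := by
    rw [htdef]
    apply mul_nonneg (pow_nonneg hq0 M)
    rw [h1a]; positivity
  have ht : t < δ / 2 := by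
    rw [htdef, h1a]
    have hinv : (0 : ℝ) < (δ / 2)⁻¹ := by positivity
    calc q ^ M * (δ / 2)⁻¹ < (δ / 2) ^ 2 * (δ / 2)⁻¹ :=
          mul_lt_mul_of_pos_right hqM hinv
      _ = δ / 2 := by field_simp
  have hlow : R * (a * M) * (1 - t) ≤ S M R (a * M) := by
    rw [htdef, hqdef]
    exact S_lower M hM1 R hR.le ha0 ha1
  have hstar : R * (a * M) * (1 - t) ≤ S M R (lamStar M) :=
    le_trans hlow (hmax M hM1 (a * M) (by positivity))
  -- lower bound on lamStar
  have hlb : (1 - δ) * M < lamStar M := by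
    by_contra hcon
    push_neg at hcon
    have h2 : S M R (lamStar M) ≤ R * lamStar M :=
      S_le M R (lamStar M) hR.le (hpos M hM1).le
    have h3 : R * lamStar M ≤ R * ((1 - δ) * M) :=
      mul_le_mul_of_nonneg_left hcon hR.le
    have hA : 1 - δ < a * (1 - t) := by
      nlinarith [ht, ht0, h1a, mul_nonneg (sub_nonneg.2 ha1.le) ht0]
    have hB : R * ↑M * (1 - δ) < R * ↑M * (a * (1 - t)) :=
      mul_lt_mul_of_pos_left hA (mul_pos hR hMpos)
    have hEq : R * (a * ↑M) * (1 - t) = R * ↑M * (a * (1 - t)) := by ring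
    have hEq2 : R * ((1 - δ) * ↑M) = R * ↑M * (1 - δ) := by ring
    linarith [hstar, h2, h3]
  -- upper bound on lamStar
  have hub : lamStar M < (1 + δ) * M := by
    by_contra hcon
    push_neg at hcon
    have hbM : (M : ℝ) ≤ (1 + δ) * M := by nlinarith
    have h2 := S_upper M hM1 R ((1 + δ) * M) (lamStar M) hR.le hbM hcon
    have hMne : (M : ℝ) ≠ 0 := ne_of_gt hMpos
    have h3 : ((1 + δ) * M / M) ^ M * Real.exp ((M : ℝ) - (1 + δ) * M) = p ^ M := by
      rw [hpdef, mul_pow, mul_div_assoc, div_self hMne, mul_one]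
      congr 1
      rw [show (M : ℝ) - (1 + δ) * M = (M : ℝ) * (-δ) from by ring, Real.exp_nat_mul]
    rw [h3] at h2
    have hX : (3 : ℝ) / 4 ≤ 1 - t := by linarith [ht, hδ4]
    have hY : (1 : ℝ) / 2 ≤ a * (1 - t) := by nlinarith [ha78, hX]
    have hZ : R * ↑M * (1 / 2) ≤ R * ↑M * (a * (1 - t)) :=
      mul_le_mul_of_nonneg_left hY (mul_pos hR hMpos).le
    have hW : R * ↑M * (↑M * p ^ M) < R * ↑M * (1 / 4) :=
      mul_lt_mul_of_pos_left hpM (mul_pos hR hMpos)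
    have hEq : R * (a * ↑M) * (1 - t) = R * ↑M * (a * (1 - t)) := by ring
    have hEq2 : R * (M : ℝ) ^ 2 * p ^ M = R * ↑M * (↑M * p ^ M) := by ring
    have hRM : 0 < R * ↑M := mul_pos hR hMpos
    linarith [hstar, h2]
  -- conclude
  rw [Real.dist_eq, abs_lt]
  have hd1 : lamStar M / M - 1 < δ := by
    rw [div_sub_one (ne_of_gt hMpos), div_lt_iff₀ hMpos]
    nlinarith [hub]
  have hd2 : -δ < lamStar M / M - 1 := by
    rw [div_sub_one (ne_of_gt hMpos), lt_div_iff₀ hMpos]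
    nlinarith [hlb]
  constructor <;> linarith
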